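/- arXiv:math/9901081 — 2 statements merged into one kernel-verified Lean document; each statement's English description precedes it below -/
import Mathlib

section
/- Let i_n, i*_n (n ≥ 1), i*_0, ii, iii, iv, iv*, iii*, ii* be nonnegative integers with all but finitely many i_n, i*_n zero, and let a be an integer. If Q1 = 24, Q2 = a − 2 and degJ ≤ Q4, then 0 ≤ Q5 ≤ 20 − a. -/
/-- Lemma 2.2(2): if `Q1 = 24`, `Q2 = a - 2` and `degJ ≤ Q4` then `0 ≤ Q5 ≤ 20 - a`. -/
theorem stmt_1 (i istar : ℕ → ℕ)
    (hi0 : i 0 = 0) (histar0 : istar 0 = 0)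
    (hfin : (Function.support i).Finite) (hfin' : (Function.support istar).Finite)
    (ii iii iv i0star ivstar iiistar iistar : ℕ) (a : ℤ)
    (hQ1 : (∑ᶠ n : ℕ, (n : ℤ) * i n) + (∑ᶠ n : ℕ, ((n : ℤ) + 6) * istar n)
      + 6 * i0star + 10 * iistar + 9 * iiistar + 8 * ivstar
      + 4 * iv + 3 * iii + 2 * ii = 24)
    (hQ2 : (∑ᶠ n : ℕ, ((n : ℤ) - 1) * i n) + (∑ᶠ n : ℕ, ((n : ℤ) + 4) * istar n)
      + 4 * i0star + 8 * iistar + 7 * iiistar + 6 * ivstar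
      + 2 * iv + iii = a - 2)
    (hMP : (∑ᶠ n : ℕ, (n : ℤ) * ((i n : ℤ) + istar n))
      ≤ 6 * (∑ᶠ n : ℕ, ((i n : ℤ) + istar n)) + 4 * ((ii : ℤ) + ivstar)
        + 3 * ((iii : ℤ) + iiistar) + 2 * ((iv : ℤ) + iistar) - 12) :
    0 ≤ ((i0star : ℤ) + iv + iii + ii)
      ∧ ((i0star : ℤ) + iv + iii + ii) ≤ 20 - a := by
  set s : Finset ℕ := (hfin.union hfin').toFinset with hs
  have hmem : ∀ n : ℕ, n ∉ s → i n = 0 ∧ istar n = 0 := by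
    intro n hn
    constructor <;> by_contra h <;> exact hn (by
      simp [hs, Set.Finite.mem_toFinset, Function.mem_support, h])
  have e1 : (∑ᶠ n : ℕ, (n : ℤ) * i n) = ∑ n ∈ s, (n : ℤ) * i n := by
    apply finsum_eq_sum_of_support_subset
    intro n hn
    simp only [Function.mem_support, ne_eq] at hn
    by_contra h
    rw [(hmem n (by simpa using h)).1] at hn; simp at hn
  have e2 : (∑ᶠ n : ℕ, ((n : ℤ) + 6) * istar n) = ∑ n ∈ s, ((n : ℤ) + 6) * istar n := by
    apply finsum_eq_sum_of_support_subset
    intro n hn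
    simp only [Function.mem_support, ne_eq] at hn
    by_contra h
    rw [(hmem n (by simpa using h)).2] at hn; simp at hn
  have e3 : (∑ᶠ n : ℕ, ((n : ℤ) - 1) * i n) = ∑ n ∈ s, ((n : ℤ) - 1) * i n := by
    apply finsum_eq_sum_of_support_subset
    intro n hn
    simp only [Function.mem_support, ne_eq] at hn
    by_contra h
    rw [(hmem n (by simpa using h)).1] at hn; simp at hn
  have e4 : (∑ᶠ n : ℕ, ((n : ℤ) + 4) * istar n) = ∑ n ∈ s, ((n : ℤ) + 4) * istar n := by
    apply finsum_eq_sum_of_support_subset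
    intro n hn
    simp only [Function.mem_support, ne_eq] at hn
    by_contra h
    rw [(hmem n (by simpa using h)).2] at hn; simp at hn
  have e5 : (∑ᶠ n : ℕ, (n : ℤ) * ((i n : ℤ) + istar n))
      = ∑ n ∈ s, (n : ℤ) * ((i n : ℤ) + istar n) := by
    apply finsum_eq_sum_of_support_subset
    intro n hn
    simp only [Function.mem_support, ne_eq] at hn
    by_contra h
    rw [(hmem n (by simpa using h)).1, (hmem n (by simpa using h)).2] at hn; simp at hn
  have e6 : (∑ᶠ n : ℕ, ((i n : ℤ) + istar n)) = ∑ n ∈ s, ((i n : ℤ) + istar n) := by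
    apply finsum_eq_sum_of_support_subset
    intro n hn
    simp only [Function.mem_support, ne_eq] at hn
    by_contra h
    rw [(hmem n (by simpa using h)).1, (hmem n (by simpa using h)).2] at hn; simp at hn
  rw [e1, e2] at hQ1
  rw [e3, e4] at hQ2
  rw [e5, e6] at hMP
  -- expand sums into named pieces
  have hA : ∀ t : Finset ℕ, True := fun _ => trivial
  set A := ∑ n ∈ s, (n : ℤ) * i n with hAdef
  set B := ∑ n ∈ s, (n : ℤ) * istar n with hBdef
  set P := ∑ n ∈ s, (i n : ℤ) with hPdef
  set Q := ∑ n ∈ s, (istar n : ℤ) with hQdef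
  have h2 : ∑ n ∈ s, ((n : ℤ) + 6) * istar n = B + 6 * Q := by
    rw [hBdef, hQdef, Finset.mul_sum, ← Finset.sum_add_distrib]
    apply Finset.sum_congr rfl; intro n _; ring
  have h3 : ∑ n ∈ s, ((n : ℤ) - 1) * i n = A - P := by
    rw [hAdef, hPdef, ← Finset.sum_sub_distrib]
    apply Finset.sum_congr rfl; intro n _; ring
  have h4 : ∑ n ∈ s, ((n : ℤ) + 4) * istar n = B + 4 * Q := by
    rw [hBdef, hQdef, Finset.mul_sum, ← Finset.sum_add_distrib]
    apply Finset.sum_congr rfl; intro n _; ring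
  have h5 : ∑ n ∈ s, (n : ℤ) * ((i n : ℤ) + istar n) = A + B := by
    rw [hAdef, hBdef, ← Finset.sum_add_distrib]
    apply Finset.sum_congr rfl; intro n _; ring
  have h6 : ∑ n ∈ s, ((i n : ℤ) + istar n) = P + Q := by
    rw [hPdef, hQdef, ← Finset.sum_add_distrib]
  rw [h2] at hQ1
  rw [h3, h4] at hQ2
  rw [h5, h6] at hMP
  have hPnn : 0 ≤ P := Finset.sum_nonneg fun n _ => by positivity
  have hQnn : 0 ≤ Q := Finset.sum_nonneg fun n _ => by positivity
  have c1 : (0 : ℤ) ≤ i0star := Int.natCast_nonneg _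
  have c2 : (0 : ℤ) ≤ iv := Int.natCast_nonneg _
  have c3 : (0 : ℤ) ≤ iii := Int.natCast_nonneg _
  have c4 : (0 : ℤ) ≤ ii := Int.natCast_nonneg _
  have c5 : (0 : ℤ) ≤ iistar := Int.natCast_nonneg _
  have c6 : (0 : ℤ) ≤ iiistar := Int.natCast_nonneg _
  have c7 : (0 : ℤ) ≤ ivstar := Int.natCast_nonneg _
  constructor
  · linarith
  · linarith
end

section
/- Let i_n, i*_n (n ≥ 1), i*_0, ii, iii, iv, iv*, iii*, ii* be nonnegative integers with all but finitely many i_n, i*_n zero. If Q1 = 24, Q2 = 18, degJ ≠ 0 and degJ ≤ Q4, then degJ = Q4, i.e. Σ_{n≥1} n·(i_n + i*_n) = 6·Σ_{n≥1} (i_n + i*_n) + 4·(ii + iv*) + 3·(iii + iii*) + 2·(iv + ii*) − 12; moreover i*_0 = iv = iii = ii = 0. -/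
/-- Theorem 0.2 (arithmetic content): if `Q1 = 24`, `Q2 = 18`, `degJ ≠ 0` and
`degJ ≤ Q4`, then `degJ = Q4` and moreover `i*_0 = iv = iii = ii = 0`. -/
theorem stmt_2 (i istar : ℕ → ℕ)
    (hi0 : i 0 = 0) (histar0 : istar 0 = 0)
    (hfin : (Function.support i).Finite) (hfin' : (Function.support istar).Finite)
    (ii iii iv i0star ivstar iiistar iistar : ℕ)
    (hQ1 : (∑ᶠ n : ℕ, (n : ℤ) * i n) + (∑ᶠ n : ℕ, ((n : ℤ) + 6) * istar n)
      + 6 * i0star + 10 * iistar + 9 * iiistar + 8 * ivstar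
      + 4 * iv + 3 * iii + 2 * ii = 24)
    (hQ2 : (∑ᶠ n : ℕ, ((n : ℤ) - 1) * i n) + (∑ᶠ n : ℕ, ((n : ℤ) + 4) * istar n)
      + 4 * i0star + 8 * iistar + 7 * iiistar + 6 * ivstar
      + 2 * iv + iii = 18)
    (hdegJ : (∑ᶠ n : ℕ, (n : ℤ) * ((i n : ℤ) + istar n)) ≠ 0)
    (hMP : (∑ᶠ n : ℕ, (n : ℤ) * ((i n : ℤ) + istar n))
      ≤ 6 * (∑ᶠ n : ℕ, ((i n : ℤ) + istar n)) + 4 * ((ii : ℤ) + ivstar)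
        + 3 * ((iii : ℤ) + iiistar) + 2 * ((iv : ℤ) + iistar) - 12) :
    (∑ᶠ n : ℕ, (n : ℤ) * ((i n : ℤ) + istar n))
      = 6 * (∑ᶠ n : ℕ, ((i n : ℤ) + istar n)) + 4 * ((ii : ℤ) + ivstar)
        + 3 * ((iii : ℤ) + iiistar) + 2 * ((iv : ℤ) + iistar) - 12
    ∧ i0star = 0 ∧ iv = 0 ∧ iii = 0 ∧ ii = 0 := by
  have hfA : (Function.support fun n : ℕ => (n : ℤ) * i n).Finite :=
    hfin.subset (by intro n hn; simp only [Function.mem_support] at hn ⊢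
                    intro h; exact hn (by simp [h]))
  have hfB : (Function.support fun n : ℕ => (n : ℤ) * istar n).Finite :=
    hfin'.subset (by intro n hn; simp only [Function.mem_support] at hn ⊢
                     intro h; exact hn (by simp [h]))
  have hfNA : (Function.support fun n : ℕ => (i n : ℤ)).Finite :=
    hfin.subset (by intro n hn; simp only [Function.mem_support] at hn ⊢
                    intro h; exact hn (by simp [h]))
  have hfNB : (Function.support fun n : ℕ => (istar n : ℤ)).Finite :=
    hfin'.subset (by intro n hn; simp only [Function.mem_support] at hn ⊢
                     intro h; exact hn (by simp [h]))
  set SA := ∑ᶠ n : ℕ, (n : ℤ) * i n with hSA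
  set SB := ∑ᶠ n : ℕ, (n : ℤ) * istar n with hSB
  set NA := ∑ᶠ n : ℕ, (i n : ℤ) with hNA
  set NB := ∑ᶠ n : ℕ, (istar n : ℤ) with hNB
  have h1 : (∑ᶠ n : ℕ, ((n : ℤ) + 6) * istar n) = SB + 6 * NB := by
    rw [hSB, hNB]
    have h6 : (∑ᶠ n : ℕ, 6 * (istar n : ℤ)) = 6 * ∑ᶠ n : ℕ, (istar n : ℤ) := by
      rw [← smul_eq_mul, smul_finsum]; simp [smul_eq_mul]
    rw [← h6, ← finsum_add_distrib hfB (hfNB.subset (by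
      intro n hn; simp only [Function.mem_support] at hn ⊢
      intro h; exact hn (by simp [h])))]
    exact finsum_congr fun n => by ring
  have h2 : (∑ᶠ n : ℕ, ((n : ℤ) - 1) * i n) = SA - NA := by
    rw [hSA, hNA, ← finsum_sub_distrib hfA hfNA]
    exact finsum_congr fun n => by ring
  have h2' : (∑ᶠ n : ℕ, ((n : ℤ) + 4) * istar n) = SB + 4 * NB := by
    rw [hSB, hNB]
    have : (∑ᶠ n : ℕ, 4 * (istar n : ℤ)) = 4 * ∑ᶠ n : ℕ, (istar n : ℤ) := by
      rw [← smul_eq_mul, smul_finsum]; simp [smul_eq_mul]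
    rw [← this, ← finsum_add_distrib hfB (hfNB.subset (by
      intro n hn; simp only [Function.mem_support] at hn ⊢
      intro h; exact hn (by simp [h])))]
    exact finsum_congr fun n => by ring
  have h3 : (∑ᶠ n : ℕ, (n : ℤ) * ((i n : ℤ) + istar n)) = SA + SB := by
    rw [hSA, hSB, ← finsum_add_distrib hfA hfB]
    exact finsum_congr fun n => by ring
  have h4 : (∑ᶠ n : ℕ, ((i n : ℤ) + istar n)) = NA + NB := by
    rw [hNA, hNB, ← finsum_add_distrib hfNA hfNB]
  have hNApos : 0 ≤ NA := by
    rw [hNA]; exact finsum_nonneg fun n => Int.ofNat_nonneg _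
  have hNBpos : 0 ≤ NB := by
    rw [hNB]; exact finsum_nonneg fun n => Int.ofNat_nonneg _
  rw [h1] at hQ1
  rw [h2, h2'] at hQ2
  rw [h3, h4] at hMP ⊢
  refine ⟨by omega, by omega, by omega, by omega, by omega⟩
end
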